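/- For every odd prime p, the Pochhammer symbol (1/2)_{p-1} equals (p/2) · Γ_p(1/2 + p - 1) / Γ_p(1/2), where Γ_p is Morita's p-adic gamma function. -/

import Mathlib

open Polynomial Finset

/-- Rising Pochhammer symbol over ℚ. -/
noncomputable def poch (x : ℚ) (n : ℕ) : ℚ := (ascPochhammer ℚ n).eval x

lemma poch_eq_prod (x : ℚ) (n : ℕ) : poch x n = ∏ i ∈ Finset.range n, (x + i) := by
  induction n with
  | zero => simp [poch]
  | succ n ih =>
    rw [Finset.prod_range_succ, ← ih, poch, poch, ascPochhammer_succ_right]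
    simp

lemma tendsto_appr (p : ℕ) [Fact p.Prime] (x : ℤ_[p]) :
    Filter.Tendsto (fun n : ℕ => ((x.appr n : ℤ_[p]))) Filter.atTop (nhds x) := by
  have hp2 : (2:ℝ) ≤ p := by exact_mod_cast (Fact.out : p.Prime).two_le
  rw [tendsto_iff_dist_tendsto_zero]
  apply squeeze_zero (fun n => dist_nonneg) (g := fun n => ((p:ℝ)⁻¹)^n)
  · intro n
    rw [dist_eq_norm, ← norm_neg, neg_sub]
    have := PadicInt.norm_le_pow_iff_mem_span_pow (x - (x.appr n : ℤ_[p])) n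
    rw [inv_pow, ← zpow_natCast, ← zpow_neg]
    exact this.mpr (PadicInt.appr_spec n x)
  · exact tendsto_pow_atTop_nhds_zero_of_lt_one (by positivity)
      (by rw [inv_lt_one_iff₀]; right; linarith)

lemma cast_dvd_iff (p : ℕ) [Fact p.Prime] (k : ℕ) :
    (p : ℤ_[p]) ∣ (k : ℤ_[p]) ↔ p ∣ k := by
  rw [← PadicInt.norm_lt_one_iff_dvd]
  have h1 : ((k : ℤ) : ℤ_[p]) = (k : ℤ_[p]) := by push_cast; rfl
  rw [← h1, PadicInt.norm_int_lt_one_iff_dvd]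
  exact Int.natCast_dvd_natCast

lemma dvd_appr_iff (p : ℕ) [Fact p.Prime] (x : ℤ_[p]) (n : ℕ) :
    p ∣ x.appr (n+1) ↔ (p : ℤ_[p]) ∣ x := by
  have hspec := PadicInt.appr_spec (n+1) x
  rw [Ideal.mem_span_singleton] at hspec
  have hd : (p : ℤ_[p]) ∣ x - x.appr (n+1) :=
    dvd_trans (dvd_pow_self _ (Nat.succ_ne_zero n)) hspec
  rw [← cast_dvd_iff p]
  constructor
  · intro hk
    have := dvd_add hd hk
    simpa using this
  · intro hx
    have := dvd_sub hx hd
    simpa using this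

section main

variable {p : ℕ} [Fact p.Prime] {G : ℤ_[p] → ℤ_[p]}

lemma Ioo_succ (k : ℕ) (hk : 1 ≤ k) : Finset.Ioo 0 (k+1) = insert k (Finset.Ioo 0 k) := by
  ext j
  simp only [Finset.mem_Ioo, Finset.mem_insert]
  omega

lemma gnat_step (hGnat : ∀ k : ℕ, G (k : ℤ_[p]) =
      (-1)^k * ∏ j ∈ (Finset.Ioo 0 k).filter (fun j => ¬ p ∣ j), (j : ℤ_[p]))
    (k : ℕ) :
    G ((k : ℤ_[p]) + 1) = (if p ∣ k then -1 else -(k:ℤ_[p])) * G k := by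
  have hcast : ((k : ℤ_[p]) + 1) = ((k+1 : ℕ) : ℤ_[p]) := by push_cast; ring
  rw [hcast, hGnat (k+1), hGnat k]
  by_cases hk : k = 0
  · subst hk
    rw [if_pos (dvd_zero p)]
    rw [show Finset.Ioo 0 1 = (∅ : Finset ℕ) from rfl,
      show Finset.Ioo 0 0 = (∅ : Finset ℕ) from rfl]
    simp
  · have h1 : 1 ≤ k := Nat.one_le_iff_ne_zero.mpr hk
    rw [Ioo_succ k h1, Finset.filter_insert]
    by_cases hd : p ∣ k
    · rw [if_pos hd, if_neg (by simpa using hd)]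
      ring
    · rw [if_neg hd, if_pos (by simpa using hd), Finset.prod_insert (by simp)]
      ring

lemma gstep_unit (hGcont : Continuous G)
    (hGnat : ∀ k : ℕ, G (k : ℤ_[p]) =
      (-1)^k * ∏ j ∈ (Finset.Ioo 0 k).filter (fun j => ¬ p ∣ j), (j : ℤ_[p]))
    (x : ℤ_[p]) (hx : ¬ (p : ℤ_[p]) ∣ x) :
    G (x + 1) = -x * G x := by
  have htd : Filter.Tendsto (fun n : ℕ => ((x.appr (n+1) : ℤ_[p]))) Filter.atTop (nhds x) :=
    (tendsto_appr p x).comp (Filter.tendsto_add_atTop_nat 1)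
  have h1 : Filter.Tendsto (fun n : ℕ => G ((x.appr (n+1) : ℤ_[p]) + 1)) Filter.atTop
      (nhds (G (x + 1))) :=
    (hGcont.tendsto _).comp (by exact htd.add tendsto_const_nhds)
  have h2 : Filter.Tendsto (fun n : ℕ => -((x.appr (n+1) : ℤ_[p])) * G (x.appr (n+1)))
      Filter.atTop (nhds (-x * G x)) :=
    (htd.neg).mul ((hGcont.tendsto _).comp htd)
  have heq : (fun n : ℕ => G ((x.appr (n+1) : ℤ_[p]) + 1)) =
      (fun n : ℕ => -((x.appr (n+1) : ℤ_[p])) * G (x.appr (n+1))) := by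
    funext n
    rw [gnat_step hGnat, if_neg (fun hd => hx ((dvd_appr_iff p x n).mp hd))]
  rw [heq] at h1
  exact tendsto_nhds_unique h1 h2

lemma gstep_dvd (hGcont : Continuous G)
    (hGnat : ∀ k : ℕ, G (k : ℤ_[p]) =
      (-1)^k * ∏ j ∈ (Finset.Ioo 0 k).filter (fun j => ¬ p ∣ j), (j : ℤ_[p]))
    (x : ℤ_[p]) (hx : (p : ℤ_[p]) ∣ x) :
    G (x + 1) = -G x := by
  have htd : Filter.Tendsto (fun n : ℕ => ((x.appr (n+1) : ℤ_[p]))) Filter.atTop (nhds x) :=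
    (tendsto_appr p x).comp (Filter.tendsto_add_atTop_nat 1)
  have h1 : Filter.Tendsto (fun n : ℕ => G ((x.appr (n+1) : ℤ_[p]) + 1)) Filter.atTop
      (nhds (G (x + 1))) :=
    (hGcont.tendsto _).comp (by exact htd.add tendsto_const_nhds)
  have h2 : Filter.Tendsto (fun n : ℕ => -G ((x.appr (n+1) : ℤ_[p])))
      Filter.atTop (nhds (-G x)) :=
    ((hGcont.tendsto _).comp htd).neg
  have heq : (fun n : ℕ => G ((x.appr (n+1) : ℤ_[p]) + 1)) =
      (fun n : ℕ => -G ((x.appr (n+1) : ℤ_[p]))) := by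
    funext n
    rw [gnat_step hGnat, if_pos ((dvd_appr_iff p x n).mpr hx), neg_one_mul]
  rw [heq] at h1
  exact tendsto_nhds_unique h1 h2

lemma gnorm_one (hGcont : Continuous G)
    (hGnat : ∀ k : ℕ, G (k : ℤ_[p]) =
      (-1)^k * ∏ j ∈ (Finset.Ioo 0 k).filter (fun j => ¬ p ∣ j), (j : ℤ_[p]))
    (x : ℤ_[p]) : ‖G x‖ = 1 := by
  have hfun : (fun x : ℤ_[p] => ‖G x‖) = (fun _ => (1:ℝ)) := by
    apply Continuous.ext_on PadicInt.denseRange_natCast (by fun_prop) continuous_const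
    rintro _ ⟨k, rfl⟩
    simp only
    rw [hGnat k, norm_mul,
      PadicInt.isUnit_iff.mp ((isUnit_one.neg).pow k), one_mul]
    have hprod : ∀ s : Finset ℕ, (∀ j ∈ s, ‖((j : ℕ) : ℤ_[p])‖ = 1) →
        ‖(∏ j ∈ s, (j : ℤ_[p]))‖ = 1 := by
      intro s
      induction s using Finset.induction_on with
      | empty => simp
      | @insert a t ha ih =>
        intro hall
        rw [Finset.prod_insert ha, norm_mul,
          hall a (Finset.mem_insert_self a t), one_mul]
        exact ih (fun j hj => hall j (Finset.mem_insert_of_mem hj))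
    apply hprod
    intro j hj
    rw [Finset.mem_filter] at hj
    refine le_antisymm (PadicInt.norm_le_one _) ?_
    by_contra hlt
    push_neg at hlt
    rw [PadicInt.norm_lt_one_iff_dvd, cast_dvd_iff] at hlt
    exact hj.2 hlt
  exact congrFun hfun x

end main

/-- for every odd prime `p`, if `G` is Morita's `p`-adic gamma function
(the continuous extension of `k ↦ (-1)^k ∏_{0<j<k, p∤j} j` on `ℤ_p`), and `h = 1/2` in
`ℤ_p`, then `(1/2)_{p-1} = (p/2) · Γ_p(1/2 + p - 1) / Γ_p(1/2)`. -/
theorem poch_half_p_sub_one_gammaP (p : ℕ) [Fact p.Prime] (hp : p ≠ 2)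
    (G : ℤ_[p] → ℤ_[p]) (hGcont : Continuous G)
    (hGnat : ∀ k : ℕ, G (k : ℤ_[p]) =
      (-1)^k * ∏ j ∈ (Finset.Ioo 0 k).filter (fun j => ¬ p ∣ j), (j : ℤ_[p]))
    (h : ℤ_[p]) (hh : 2 * h = 1) :
    ((poch (1/2) (p-1) : ℚ) : ℚ_[p]) =
      ((p : ℚ_[p]) / 2) * ((G (h + p - 1) : ℚ_[p]) / (G h : ℚ_[p])) := by
  have hprime : p.Prime := Fact.out
  have hodd : p % 2 = 1 := Nat.odd_iff.mp (hprime.odd_of_ne_two hp)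
  have hp3 : 3 ≤ p := by
    rcases hprime.two_le.lt_or_eq with h' | h'
    · omega
    · omega
  -- 2 is a unit in ℤ_[p]
  have h2unit : IsUnit (2 : ℤ_[p]) := IsUnit.of_mul_eq_one h hh
  -- divisibility criterion for h + n
  have hdvd_iff : ∀ n : ℕ, ((p : ℤ_[p]) ∣ (h + n)) ↔ p ∣ (2*n+1) := by
    intro n
    have hcast : ((2*n+1 : ℕ) : ℤ_[p]) = 2 * (h + n) := by
      push_cast
      rw [← hh]; ring
    rw [← cast_dvd_iff p (2*n+1), hcast, h2unit.dvd_mul_left]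
  -- key induction
  have key : ∀ n : ℕ, G (h + n) =
      (-1)^n * (∏ i ∈ (Finset.range n).filter (fun i => ¬ p ∣ (2*i+1)), (h + i)) * G h := by
    intro n
    induction n with
    | zero => simp
    | succ n ih =>
      have hstep : G (h + (n+1 : ℕ)) = G ((h + n) + 1) := by
        push_cast; ring_nf
      rw [hstep, Finset.range_add_one, Finset.filter_insert]
      by_cases hd : p ∣ (2*n+1)
      · rw [gstep_dvd hGcont hGnat _ ((hdvd_iff n).mpr hd), ih, if_neg (by simpa using hd)]
        ring
      · rw [gstep_unit hGcont hGnat _ (fun hc => hd ((hdvd_iff n).mp hc)), ih,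
          if_pos (by simpa using hd), Finset.prod_insert (by simp)]
        ring
  -- the filter complement is exactly {(p-1)/2}
  have hfilter : (Finset.range (p-1)).filter (fun i => p ∣ (2*i+1)) = {(p-1)/2} := by
    ext i
    simp only [Finset.mem_filter, Finset.mem_range, Finset.mem_singleton]
    constructor
    · rintro ⟨hi, hdvd⟩
      rcases hdvd with ⟨k, hk⟩
      have hk2 : k < 2 := by
        by_contra hge
        push_neg at hge
        have : 2 * p ≤ p * k := by calc 2 * p = p * 2 := by ring
                                         _ ≤ p * k := Nat.mul_le_mul_left p hge
        omega
      match k, hk2 with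
      | 0, _ => omega
      | 1, _ => omega
    · rintro rfl
      constructor
      · omega
      · have : 2 * ((p-1)/2) + 1 = p := by omega
        rw [this]
  -- main assembly
  set S := (Finset.range (p-1)).filter (fun i => ¬ p ∣ (2*i+1)) with hS
  have hGh : ‖G h‖ = 1 := gnorm_one hGcont hGnat h
  have hGh0 : G h ≠ 0 := by intro h0; rw [h0, norm_zero] at hGh; norm_num at hGh
  have hGhQ : (G h : ℚ_[p]) ≠ 0 := PadicInt.coe_ne_zero.mpr hGh0
  have harg : h + (p:ℤ_[p]) - 1 = h + ((p-1 : ℕ) : ℤ_[p]) := by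
    have : ((p-1 : ℕ) : ℤ_[p]) = (p:ℤ_[p]) - 1 := by
      rw [Nat.cast_sub (by omega : 1 ≤ p), Nat.cast_one]
    rw [this]; ring
  have heven : Even (p-1) := ⟨(p-1)/2, by omega⟩
  have hkey := key (p-1)
  rw [heven.neg_one_pow, one_mul] at hkey
  have hhQ : (2:ℚ_[p]) * ((h : ℚ_[p])) = 1 := by
    have := congrArg (fun z : ℤ_[p] => (z : ℚ_[p])) hh
    push_cast at this
    simpa [show ((2:ℤ_[p]):ℚ_[p]) = 2 from PadicInt.coe_natCast 2] using this
  have hhalf : (h : ℚ_[p]) = 1/2 := by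
    rw [eq_div_iff (two_ne_zero)]
    linear_combination hhQ
  have hmid : ((h:ℚ_[p])) + (((p-1)/2 : ℕ) : ℚ_[p]) = (p:ℚ_[p]) / 2 := by
    have hc : (2:ℚ_[p]) * (((p-1)/2 : ℕ) : ℚ_[p]) = (p:ℚ_[p]) - 1 := by
      have hnat : 2 * ((p-1)/2) = p - 1 := by omega
      have hcast := congrArg (fun n : ℕ => (n : ℚ_[p])) hnat
      simp only [Nat.cast_mul, Nat.cast_ofNat, Nat.cast_sub (by omega : 1 ≤ p),
        Nat.cast_one] at hcast
      exact_mod_cast hcast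
    rw [eq_div_iff (two_ne_zero : (2:ℚ_[p]) ≠ 0)]
    linear_combination hhQ + hc
  -- LHS as a product over ℚ_[p]
  have hLHS : ((poch (1/2) (p-1) : ℚ) : ℚ_[p]) =
      ((p : ℚ_[p])/2) * ∏ i ∈ S, ((h : ℚ_[p]) + i) := by
    rw [poch_eq_prod]
    rw [show ((∏ i ∈ Finset.range (p-1), ((1:ℚ)/2 + i) : ℚ) : ℚ_[p]) =
      (Rat.castHom ℚ_[p]) (∏ i ∈ Finset.range (p-1), ((1:ℚ)/2 + i)) from rfl,
      map_prod (Rat.castHom ℚ_[p])]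
    have hcongr : ∀ i ∈ Finset.range (p-1),
        (Rat.castHom ℚ_[p]) ((1:ℚ)/2 + i) = ((h : ℚ_[p]) + i) := by
      intro i _
      rw [hhalf]
      simp
    rw [Finset.prod_congr rfl hcongr,
      ← Finset.prod_filter_mul_prod_filter_not (Finset.range (p-1)) (fun i => p ∣ (2*i+1)),
      hfilter, Finset.prod_singleton, hmid]
  -- RHS
  have hRHSG : (G (h + (p:ℤ_[p]) - 1) : ℚ_[p]) = (∏ i ∈ S, ((h : ℚ_[p]) + i)) * (G h : ℚ_[p]) := by
    rw [harg, hkey, PadicInt.coe_mul]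
    congr 1
    rw [show ((∏ i ∈ S, (h + (i:ℤ_[p])) : ℤ_[p]) : ℚ_[p]) =
      (PadicInt.Coe.ringHom : ℤ_[p] →+* ℚ_[p]) (∏ i ∈ S, (h + (i:ℤ_[p]))) from rfl,
      map_prod (PadicInt.Coe.ringHom : ℤ_[p] →+* ℚ_[p])]
    apply Finset.prod_congr rfl
    intro i _
    show ((h + (i:ℤ_[p]) : ℤ_[p]) : ℚ_[p]) = (h : ℚ_[p]) + i
    push_cast
    rfl
  rw [hLHS, hRHSG, mul_div_cancel_right₀ _ hGhQ]
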